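/- Let r_1,…,r_N ≥ 0 with ϱ ≥ 1 and 0 < a ≤ ϱ. Define s̄_1 = Σ i^a r_i, s̄_2 = Σ i^{a+ϱ} r_i, s̄_3 = Σ i^{a+2ϱ} r_i, δ̂_1 = s̄_2 − s̄_1, δ̂_2 = s̄_3 − s̄_2, and δ̂ = (δ̂_2/δ̂_1)^{1/ϱ}. Assume δ̂_1 > 0. Then Σ_{i=1}^N r_i ≤ s̄_1 − δ̂_1 (δ̂^a − 1)/(δ̂^a (δ̂^ϱ − 1)). -/

import Mathlib

open Finset Real


lemma frolov_G_nonneg (α : ℝ) (hα : 0 < α) {x : ℝ} (hx : 1 ≤ x) :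
    0 ≤ x ^ (α + 2) - x ^ 2 - α * x * (x - 1) - α * (α + 1) * (x - 1) ^ 2 / 2 := by
  set G : ℝ → ℝ := fun y => y ^ (α + 2) - y ^ 2 - α * y * (y - 1) - α * (α + 1) * (y - 1) ^ 2 / 2
    with hGdef
  set G₁ : ℝ → ℝ := fun y => (α + 2) * y ^ (α + 1) - 2 * y - α * (2 * y - 1) - α * (α + 1) * (y - 1)
    with hG₁def
  have hG' : ∀ y : ℝ, 0 < y → HasDerivAt G (G₁ y) y := by
    intro y hy
    have h1 : HasDerivAt (fun u : ℝ => u ^ (α + 2)) ((α + 2) * y ^ (α + 1)) y := by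
      have := Real.hasDerivAt_rpow_const (x := y) (p := α + 2) (Or.inl hy.ne')
      rwa [show α + 2 - 1 = α + 1 by ring] at this
    have h2 : HasDerivAt (fun u : ℝ => u ^ 2) (2 * y) y := by
      simpa using hasDerivAt_pow 2 y
    have h3 : HasDerivAt (fun u : ℝ => α * u * (u - 1))
        (α * 1 * (y - 1) + α * y * 1) y :=
      (((hasDerivAt_id y).const_mul α).mul ((hasDerivAt_id y).sub_const 1))
    have h4 : HasDerivAt (fun u : ℝ => α * (α + 1) * (u - 1) ^ 2 / 2)
        (α * (α + 1) * (2 * (y - 1) ^ 1 * 1) / 2) y :=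
      ((((hasDerivAt_id y).sub_const 1).pow 2).const_mul (α * (α + 1))).div_const 2
    have := ((h1.sub h2).sub h3).sub h4
    refine this.congr_deriv ?_
    simp only [hG₁def]; ring
  have hG₁' : ∀ y : ℝ, 0 < y →
      HasDerivAt G₁ ((α + 2) * ((α + 1) * y ^ α) - 2 - 2 * α - α * (α + 1)) y := by
    intro y hy
    have h1 : HasDerivAt (fun u : ℝ => u ^ (α + 1)) ((α + 1) * y ^ α) y := by
      have := Real.hasDerivAt_rpow_const (x := y) (p := α + 1) (Or.inl hy.ne')
      rwa [show α + 1 - 1 = α by ring] at this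
    have h2 : HasDerivAt (fun u : ℝ => 2 * u) 2 y := by
      simpa using (hasDerivAt_id y).const_mul (2 : ℝ)
    have h3 : HasDerivAt (fun u : ℝ => α * (2 * u - 1)) (α * 2) y := by
      simpa using ((h2.sub_const 1).const_mul α)
    have h4 : HasDerivAt (fun u : ℝ => α * (α + 1) * (u - 1)) (α * (α + 1)) y := by
      simpa using (((hasDerivAt_id y).sub_const 1).const_mul (α * (α + 1)))
    have := (((h1.const_mul (α + 2)).sub h2).sub h3).sub h4
    refine this.congr_deriv ?_
    ring
  have hmono₁ : MonotoneOn G₁ (Set.Ici 1) := by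
    apply monotoneOn_of_deriv_nonneg (convex_Ici 1)
    · intro y hy
      exact (hG₁' y (lt_of_lt_of_le one_pos hy)).differentiableAt.continuousAt.continuousWithinAt
    · rw [interior_Ici]
      intro y hy
      exact (hG₁' y (lt_trans one_pos hy)).differentiableAt.differentiableWithinAt
    · rw [interior_Ici]
      intro y hy
      rw [(hG₁' y (lt_trans one_pos hy)).deriv]
      have h1y : (1 : ℝ) ≤ y ^ α := Real.one_le_rpow (le_of_lt hy) hα.le
      have hc : (0:ℝ) ≤ (α + 2) * (α + 1) := by nlinarith
      nlinarith [mul_le_mul_of_nonneg_left h1y hc]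
  have hG₁nonneg : ∀ y : ℝ, 1 ≤ y → 0 ≤ G₁ y := by
    intro y hy
    have h0 : G₁ 1 = 0 := by simp [hG₁def, Real.one_rpow]; ring
    have := hmono₁ (Set.mem_Ici.mpr le_rfl) (Set.mem_Ici.mpr hy) hy
    linarith [h0 ▸ this]
  have hmono : MonotoneOn G (Set.Ici 1) := by
    apply monotoneOn_of_deriv_nonneg (convex_Ici 1)
    · intro y hy
      exact (hG' y (lt_of_lt_of_le one_pos hy)).differentiableAt.continuousAt.continuousWithinAt
    · rw [interior_Ici]
      intro y hy
      exact (hG' y (lt_trans one_pos hy)).differentiableAt.differentiableWithinAt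
    · rw [interior_Ici]
      intro y hy
      rw [(hG' y (lt_trans one_pos hy)).deriv]
      exact hG₁nonneg y hy.le
  have h0 : G 1 = 0 := by simp [hGdef, Real.one_rpow]
  have := hmono (Set.mem_Ici.mpr le_rfl) (Set.mem_Ici.mpr hx) hx
  rw [h0] at this
  exact this

lemma frolovPhi_convex (α : ℝ) (hα : 0 < α) :
    ConvexOn ℝ (Set.Ioi (1 : ℝ)) (fun u : ℝ => (1 - u ^ (-α)) / (u - 1)) := by
  set φ : ℝ → ℝ := fun u => (1 - u ^ (-α)) / (u - 1) with hφdef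
  set φ₁ : ℝ → ℝ := fun u =>
      (α * u ^ (-α - 1) * (u - 1) - (1 - u ^ (-α))) / (u - 1) ^ 2 with hφ₁def
  set φ₂ : ℝ → ℝ := fun u =>
      (α * (-α - 1) * u ^ (-α - 2) * (u - 1) * (u - 1) ^ 2 -
        (α * u ^ (-α - 1) * (u - 1) - (1 - u ^ (-α))) * (2 * (u - 1))) / ((u - 1) ^ 2) ^ 2
    with hφ₂def
  have hd1 : ∀ x ∈ Set.Ioi (1 : ℝ), HasDerivAt φ (φ₁ x) x := by
    intro x hx
    have hx1 : (1 : ℝ) < x := hx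
    have hx0 : (0 : ℝ) < x := lt_trans one_pos hx1
    have hne : x - 1 ≠ 0 := sub_ne_zero.mpr (ne_of_gt hx1)
    have h1 : HasDerivAt (fun u : ℝ => u ^ (-α)) (-α * x ^ (-α - 1)) x :=
      Real.hasDerivAt_rpow_const (Or.inl hx0.ne')
    have h2 : HasDerivAt (fun u : ℝ => 1 - u ^ (-α)) (-(-α * x ^ (-α - 1))) x :=
      h1.const_sub 1
    have h3 : HasDerivAt (fun u : ℝ => u - 1) 1 x := (hasDerivAt_id x).sub_const 1
    have := h2.div h3 hne
    refine this.congr_deriv ?_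
    simp only [hφ₁def]
    ring
  have hd2 : ∀ x ∈ Set.Ioi (1 : ℝ), HasDerivAt φ₁ (φ₂ x) x := by
    intro x hx
    have hx1 : (1 : ℝ) < x := hx
    have hx0 : (0 : ℝ) < x := lt_trans one_pos hx1
    have hne : x - 1 ≠ 0 := sub_ne_zero.mpr (ne_of_gt hx1)
    have ha1 : HasDerivAt (fun u : ℝ => u ^ (-α - 1)) ((-α - 1) * x ^ (-α - 2)) x := by
      have := Real.hasDerivAt_rpow_const (x := x) (p := -α - 1) (Or.inl hx0.ne')
      rwa [show -α - 1 - 1 = -α - 2 by ring] at this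
    have h1 : HasDerivAt (fun u : ℝ => u ^ (-α)) (-α * x ^ (-α - 1)) x :=
      Real.hasDerivAt_rpow_const (Or.inl hx0.ne')
    have h2 : HasDerivAt (fun u : ℝ => 1 - u ^ (-α)) (-(-α * x ^ (-α - 1))) x :=
      h1.const_sub 1
    have h3 : HasDerivAt (fun u : ℝ => u - 1) 1 x := (hasDerivAt_id x).sub_const 1
    have hnum : HasDerivAt (fun u : ℝ => α * u ^ (-α - 1) * (u - 1) - (1 - u ^ (-α)))
        ((α * ((-α - 1) * x ^ (-α - 2))) * (x - 1) + (α * x ^ (-α - 1)) * 1 -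
          -(-α * x ^ (-α - 1))) x :=
      ((ha1.const_mul α).mul h3).sub h2
    have hden : HasDerivAt (fun u : ℝ => (u - 1) ^ 2) ((2 : ℕ) * (x - 1) ^ 1 * 1) x :=
      h3.pow 2
    have hne2 : (x - 1) ^ 2 ≠ 0 := pow_ne_zero 2 hne
    have := hnum.div hden hne2
    refine this.congr_deriv ?_
    simp only [hφ₂def]
    push_cast
    ring
  apply convexOn_of_deriv2_nonneg (convex_Ioi 1)
  · exact fun x hx => (hd1 x hx).differentiableAt.continuousAt.continuousWithinAt
  · rw [interior_Ioi]
    exact fun x hx => (hd1 x hx).differentiableAt.differentiableWithinAt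
  · rw [interior_Ioi]
    intro x hx
    have hev : deriv φ =ᶠ[nhds x] φ₁ := by
      filter_upwards [isOpen_Ioi.mem_nhds hx] with y hy
      exact (hd1 y hy).deriv
    exact ((hd2 x hx).differentiableAt.congr_of_eventuallyEq hev).differentiableWithinAt
  · rw [interior_Ioi]
    intro x hx
    have hx1 : (1 : ℝ) < x := hx
    have hx0 : (0 : ℝ) < x := lt_trans one_pos hx1
    have hxm : (0 : ℝ) < x - 1 := by linarith
    have hev : deriv φ =ᶠ[nhds x] φ₁ := by
      filter_upwards [isOpen_Ioi.mem_nhds hx] with y hy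
      exact (hd1 y hy).deriv
    have hiter : deriv^[2] φ x = φ₂ x := by
      have : deriv (deriv φ) x = deriv φ₁ x := hev.deriv_eq
      rw [show deriv^[2] φ x = deriv (deriv φ) x from rfl, this, (hd2 x hx).deriv]
    rw [hiter]
    -- now show 0 ≤ φ₂ x
    have hc : (0 : ℝ) < x ^ (-α - 2) := Real.rpow_pos_of_pos hx0 _
    have hG := frolov_G_nonneg α hα hx1.le
    have h1 : x ^ (-α - 1) = x ^ (-α - 2) * x := by
      rw [show -α - 1 = -α - 2 + 1 by ring, Real.rpow_add_one hx0.ne']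
    have h2 : x ^ (-α) = x ^ (-α - 2) * x * x := by
      rw [show -α = -α - 2 + 1 + 1 by ring, Real.rpow_add_one hx0.ne',
        Real.rpow_add_one hx0.ne']
      ring
    have h3 : x ^ (-α - 2) * x ^ (α + 2) = 1 := by
      rw [← Real.rpow_add hx0]
      norm_num
    have hnum : α * (-α - 1) * x ^ (-α - 2) * (x - 1) * (x - 1) ^ 2 -
        (α * x ^ (-α - 1) * (x - 1) - (1 - x ^ (-α))) * (2 * (x - 1)) =
        2 * (x - 1) * x ^ (-α - 2) *
          (x ^ (α + 2) - x ^ 2 - α * x * (x - 1) - α * (α + 1) * (x - 1) ^ 2 / 2) := by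
      rw [h1, h2]
      linear_combination (-2 * (x - 1)) * h3
    simp only [hφ₂def]
    apply div_nonneg
    · rw [hnum]
      exact mul_nonneg (mul_nonneg (mul_nonneg (by norm_num) hxm.le) hc.le) hG
    · positivity

theorem frolov_cor8_first (N : ℕ) (r : ℕ → ℝ) (a ϱ : ℝ)
    (hr : ∀ i ∈ Finset.Icc 1 N, 0 ≤ r i)
    (ha : 0 < a) (haϱ : a ≤ ϱ) (hϱ : 1 ≤ ϱ)
    (s₁ s₂ s₃ δ₁ δ₂ δ : ℝ)
    (hs₁ : s₁ = ∑ i ∈ Finset.Icc 1 N, (i : ℝ) ^ a * r i)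
    (hs₂ : s₂ = ∑ i ∈ Finset.Icc 1 N, (i : ℝ) ^ (a + ϱ) * r i)
    (hs₃ : s₃ = ∑ i ∈ Finset.Icc 1 N, (i : ℝ) ^ (a + 2 * ϱ) * r i)
    (hδ₁ : δ₁ = s₂ - s₁) (hδ₂ : δ₂ = s₃ - s₂)
    (hδ : δ = (δ₂ / δ₁) ^ (1 / ϱ))
    (hδ₁pos : 0 < δ₁) :
    ∑ i ∈ Finset.Icc 1 N, r i
      ≤ s₁ - δ₁ * (δ ^ a - 1) / (δ ^ a * (δ ^ ϱ - 1)) := by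
  have hϱ0 : (0 : ℝ) < ϱ := lt_of_lt_of_le one_pos hϱ
  set α := a / ϱ with hαdef
  have hα : 0 < α := div_pos ha hϱ0
  set T := Finset.Icc 2 N with hTdef
  have hTsub : T ⊆ Finset.Icc 1 N := Finset.Icc_subset_Icc_left (by norm_num)
  set w : ℕ → ℝ := fun i => (i : ℝ) ^ a * ((i : ℝ) ^ ϱ - 1) * r i with hwdef
  set z : ℕ → ℝ := fun i => (i : ℝ) ^ ϱ with hzdef
  -- basic facts on T
  have hcast : ∀ i ∈ T, (2 : ℝ) ≤ (i : ℝ) := by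
    intro i hi
    rw [hTdef, Finset.mem_Icc] at hi
    exact_mod_cast hi.1
  have hz2 : ∀ i ∈ T, (2 : ℝ) ≤ z i := by
    intro i hi
    calc (2 : ℝ) = 2 ^ (1 : ℝ) := by rw [Real.rpow_one]
    _ ≤ 2 ^ ϱ := Real.rpow_le_rpow_of_exponent_le (by norm_num) hϱ
    _ ≤ (i : ℝ) ^ ϱ := Real.rpow_le_rpow (by norm_num) (hcast i hi) hϱ0.le
  have hz1 : ∀ i ∈ T, z i ∈ Set.Ioi (1 : ℝ) := fun i hi => by
    have := hz2 i hi; simp only [Set.mem_Ioi]; linarith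
  have hw0 : ∀ i ∈ T, 0 ≤ w i := by
    intro i hi
    have h1 : (0 : ℝ) ≤ (i : ℝ) ^ a := Real.rpow_nonneg (by positivity) a
    have h2 : (0 : ℝ) ≤ (i : ℝ) ^ ϱ - 1 := by have := hz2 i hi; simp only [hzdef] at this; linarith
    exact mul_nonneg (mul_nonneg h1 h2) (hr i (hTsub hi))
  have hpos : ∀ i ∈ Finset.Icc 1 N, (0 : ℝ) < (i : ℝ) := by
    intro i hi
    rw [Finset.mem_Icc] at hi
    exact_mod_cast lt_of_lt_of_le zero_lt_one hi.1
  -- δ₁, δ₂ as sums over T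
  have honly : ∀ i ∈ Finset.Icc 1 N, i ∉ T → i = 1 := by
    intro i hi hit
    rw [Finset.mem_Icc] at hi
    rw [hTdef, Finset.mem_Icc] at hit
    omega
  have hδ₁' : δ₁ = ∑ i ∈ T, w i := by
    have e1 : δ₁ = ∑ i ∈ Finset.Icc 1 N, w i := by
      rw [hδ₁, hs₂, hs₁, ← Finset.sum_sub_distrib]
      refine Finset.sum_congr rfl fun i hi => ?_
      rw [Real.rpow_add (hpos i hi)]
      simp only [hwdef]; ring
    rw [e1]
    refine (Finset.sum_subset hTsub fun i hi hit => ?_).symm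
    rw [honly i hi hit]
    simp [hwdef, Real.one_rpow]
  have hδ₂' : δ₂ = ∑ i ∈ T, w i * z i := by
    have e1 : δ₂ = ∑ i ∈ Finset.Icc 1 N, w i * z i := by
      rw [hδ₂, hs₃, hs₂, ← Finset.sum_sub_distrib]
      refine Finset.sum_congr rfl fun i hi => ?_
      rw [show a + 2 * ϱ = a + ϱ + ϱ by ring, Real.rpow_add (hpos i hi) (a + ϱ) ϱ,
        Real.rpow_add (hpos i hi) a ϱ]
      simp only [hwdef, hzdef]; ring
    rw [e1]
    refine (Finset.sum_subset hTsub fun i hi hit => ?_).symm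
    rw [honly i hi hit]
    simp [hwdef, hzdef, Real.one_rpow]
  have hsum : 0 < ∑ i ∈ T, w i := hδ₁' ▸ hδ₁pos
  -- δ₂ ≥ 2 δ₁
  have hm2 : 2 * δ₁ ≤ δ₂ := by
    rw [hδ₁', hδ₂']
    have : ∑ i ∈ T, w i * 2 ≤ ∑ i ∈ T, w i * z i :=
      Finset.sum_le_sum fun i hi => mul_le_mul_of_nonneg_left (hz2 i hi) (hw0 i hi)
    calc 2 * ∑ i ∈ T, w i = ∑ i ∈ T, w i * 2 := by
          rw [Finset.mul_sum]; exact Finset.sum_congr rfl fun i _ => mul_comm _ _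
    _ ≤ ∑ i ∈ T, w i * z i := this
  have hm1 : 1 < δ₂ / δ₁ := by
    rw [lt_div_iff₀ hδ₁pos]; linarith
  have hm0 : 0 < δ₂ / δ₁ := lt_trans one_pos hm1
  -- Jensen
  have hjen := (frolovPhi_convex α hα).map_centerMass_le hw0 hsum hz1
  simp only [Finset.centerMass, smul_eq_mul, Function.comp] at hjen
  rw [← hδ₁', ← hδ₂', inv_mul_eq_div] at hjen
  -- rewrite the RHS sum
  have hrhs : ∑ i ∈ T, w i * ((1 - z i ^ (-α)) / (z i - 1)) = s₁ - ∑ i ∈ Finset.Icc 1 N, r i := by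
    have e1 : ∀ i ∈ T, w i * ((1 - z i ^ (-α)) / (z i - 1)) = ((i : ℝ) ^ a - 1) * r i := by
      intro i hi
      have hi0 : (0 : ℝ) < (i : ℝ) := hpos i (hTsub hi)
      have hzne : z i - 1 ≠ 0 := by have := hz2 i hi; intro h; simp only [hzdef] at *; linarith
      have hpow : ((i : ℝ) ^ ϱ) ^ (-α) = (i : ℝ) ^ (-a) := by
        rw [← Real.rpow_mul hi0.le]
        congr 1
        rw [hαdef]; field_simp
      have hinv : (i : ℝ) ^ a * (i : ℝ) ^ (-a) = 1 := by
        rw [← Real.rpow_add hi0]; simp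
      simp only [hwdef, hzdef] at *
      rw [hpow]
      field_simp
      linear_combination (-(r i)) * hinv
    rw [Finset.sum_congr rfl e1]
    have e2 : ∑ i ∈ T, ((i : ℝ) ^ a - 1) * r i
        = ∑ i ∈ Finset.Icc 1 N, ((i : ℝ) ^ a - 1) * r i := by
      refine Finset.sum_subset hTsub fun i hi hit => ?_
      rw [honly i hi hit]
      simp [Real.one_rpow]
    rw [e2, hs₁, ← Finset.sum_sub_distrib]
    refine Finset.sum_congr rfl fun i hi => ?_
    ring
  rw [hrhs] at hjen
  -- multiply Jensen by δ₁
  have hkey : δ₁ * ((1 - (δ₂ / δ₁) ^ (-α)) / (δ₂ / δ₁ - 1)) ≤ s₁ - ∑ i ∈ Finset.Icc 1 N, r i := by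
    have := mul_le_mul_of_nonneg_left hjen hδ₁pos.le
    rwa [← mul_assoc, mul_inv_cancel₀ hδ₁pos.ne', one_mul] at this
  -- identify δ^ϱ and δ^a
  have hδϱ : δ ^ ϱ = δ₂ / δ₁ := by
    rw [hδ, ← Real.rpow_mul hm0.le, one_div, inv_mul_cancel₀ hϱ0.ne', Real.rpow_one]
  have hδa : δ ^ a = (δ₂ / δ₁) ^ α := by
    rw [hδ, ← Real.rpow_mul hm0.le]
    congr 1
    rw [hαdef]; ring
  have hmα1 : 1 < (δ₂ / δ₁) ^ α := by
    rw [Real.one_lt_rpow_iff_of_pos hm0]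
    exact Or.inl ⟨hm1, hα⟩
  have heq : δ₁ * (δ ^ a - 1) / (δ ^ a * (δ ^ ϱ - 1))
      = δ₁ * ((1 - (δ₂ / δ₁) ^ (-α)) / (δ₂ / δ₁ - 1)) := by
    rw [hδa, hδϱ, Real.rpow_neg hm0.le]
    have h1 : (δ₂ / δ₁) ^ α ≠ 0 := by positivity
    have h2 : δ₂ / δ₁ - 1 ≠ 0 := by intro h; linarith
    field_simp
  rw [heq]
  linarith [hkey]
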